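/- Let K be a field equipped with an absolute value |·| : K → ℝ, let V be a finite-dimensional K-vector space, and let ε ≥ 0. Let s be an invertible K-linear endomorphism of V whose eigenspaces span V (the supremum of the eigenspaces of s is all of V), and let y be a K-linear endomorphism of V commuting with s. Assume that every eigenvalue μ of y satisfies |μ − 1| ≤ ε, and that every eigenvalue ν ≠ 1 of s satisfies |ν⁻¹ − 1| > ε. Then every vector w ∈ V with (s ∘ y)(w) = w satisfies s(w) = w. -/

import Mathlib

/-- Let `K` be a field with an absolute value, `V` a finite-dimensional `K`-vector space,
`ε ≥ 0`, `s` an invertible endomorphism of `V` whose eigenspaces span `V`, and `y` an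
endomorphism commuting with `s`, all of whose eigenvalues `μ` satisfy `|μ - 1| ≤ ε`,
while every eigenvalue `ν ≠ 1` of `s` satisfies `|ν⁻¹ - 1| > ε`.  Then every vector
fixed by `s ∘ y` is fixed by `s`. -/
theorem stmt_2 {K V : Type*} [Field K] [AddCommGroup V] [Module K V]
    [FiniteDimensional K V]
    (v : AbsoluteValue K ℝ) (ε : ℝ) (hε : 0 ≤ ε)
    (s y : Module.End K V) (hs : IsUnit s)
    (hspan : (⨆ μ : K, s.eigenspace μ) = ⊤)
    (hcomm : Commute s y)
    (hy : ∀ μ : K, y.HasEigenvalue μ → v (μ - 1) ≤ ε)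
    (hsep : ∀ ν : K, s.HasEigenvalue ν → ν ≠ 1 → ε < v (ν⁻¹ - 1)) :
    ∀ w : V, (s * y) w = w → s w = w := by
  classical
  intro w hw
  -- `y` preserves each eigenspace of `s`
  have hmaps : ∀ (μ : K) (x : V), x ∈ s.eigenspace μ → y x ∈ s.eigenspace μ := by
    intro μ x hx
    rw [Module.End.mem_eigenspace_iff] at hx ⊢
    have hsy : s (y x) = y (s x) := by
      rw [← Module.End.mul_apply, ← Module.End.mul_apply, hcomm.eq]
    rw [hsy, hx, map_smul]
  -- decompose `w` into eigenspace components
  have hw' : w ∈ ⨆ μ : K, s.eigenspace μ := hspan ▸ Submodule.mem_top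
  rw [Submodule.mem_iSup_iff_exists_dfinsupp] at hw'
  obtain ⟨c, hc⟩ := hw'
  set L := DFinsupp.lsum ℕ (M := fun μ : K ↦ ↥(s.eigenspace μ)) (fun μ => (s.eigenspace μ).subtype)
    with hL
  -- the dfinsupp whose μ-component is μ • y (c μ)
  let d : Π₀ μ : K, ↥(s.eigenspace μ) :=
    DFinsupp.mapRange
      (fun μ (x : ↥(s.eigenspace μ)) =>
        (⟨μ • y x, Submodule.smul_mem _ _ (hmaps μ x x.2)⟩ : ↥(s.eigenspace μ)))
      (fun μ => by simp) c
  have hLd : L d = (s * y) w := by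
    rw [← hc]
    simp only [hL, DFinsupp.lsum_apply_apply, DFinsupp.sumAddHom_apply]
    rw [show (d.sum fun i (x : ↥(s.eigenspace i)) =>
        (s.eigenspace i).subtype.toAddMonoidHom x) =
        c.sum fun μ (x : ↥(s.eigenspace μ)) => μ • y (x : V) from
      DFinsupp.sum_mapRange_index (by simp)]
    simp only [DFinsupp.sum, LinearMap.toAddMonoidHom_coe, Submodule.coe_subtype]
    rw [map_sum]
    refine Finset.sum_congr rfl fun μ _ => ?_
    have := Module.End.mem_eigenspace_iff.mp (hmaps μ _ (c μ).2)
    simpa [Module.End.mul_apply] using this.symm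
  have hdc : d = c := by
    apply s.eigenspaces_iSupIndep.dfinsupp_lsum_injective
    rw [← hL, hLd, hw, hc]
  have hcomp : ∀ μ : K, μ • y (c μ : V) = (c μ : V) := by
    intro μ
    have := congrArg (fun f => ((f μ : ↥(s.eigenspace μ)) : V)) hdc
    simpa [d] using this
  -- components at μ ≠ 1 vanish
  have hzero : ∀ μ : K, μ ≠ 1 → (c μ : V) = 0 := by
    intro μ hμ
    by_contra h0
    have hμ0 : μ ≠ 0 := by
      rintro rfl; exact h0 (by simpa using (hcomp 0).symm)
    have hev : y.HasEigenvalue μ⁻¹ := by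
      apply Module.End.hasEigenvalue_of_hasEigenvector (x := (c μ : V))
      refine ⟨Module.End.mem_eigenspace_iff.mpr ?_, h0⟩
      conv_rhs => rw [← hcomp μ]
      rw [smul_smul, inv_mul_cancel₀ hμ0, one_smul]
    have hse : s.HasEigenvalue μ :=
      Module.End.hasEigenvalue_of_hasEigenvector ⟨(c μ).2, h0⟩
    linarith [hy μ⁻¹ hev, hsep μ hse hμ]
  -- hence `w` lies in the eigenspace of `1`
  have hw1 : w ∈ s.eigenspace 1 := by
    rw [← hc]
    simp only [hL, DFinsupp.lsum_apply_apply, DFinsupp.sumAddHom_apply, DFinsupp.sum,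
      LinearMap.toAddMonoidHom_coe, Submodule.coe_subtype]
    refine Submodule.sum_mem _ fun μ _ => ?_
    rcases eq_or_ne μ 1 with rfl | h
    · exact (c 1).2
    · rw [hzero μ h]; exact zero_mem _
  simpa using Module.End.mem_eigenspace_iff.mp hw1
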